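/- Let a(t), b(t), c(t) solve the ODE system a' = a² + bc, b' = b² + ac, c' = c² + ab on [0,T), with a ≤ b ≤ c and S := 2(a+b+c) > 0 throughout. Then the quantity a/S is monotone non-decreasing in t; indeed (a/S)' = (2/S²)(b²(c−a) + c²(b−a)) ≥ 0. -/

import Mathlib

theorem stmt12 (a b c : ℝ → ℝ) (T : ℝ)
    (ha : ∀ t ∈ Set.Ico (0:ℝ) T, HasDerivAt a ((a t)^2 + b t * c t) t)
    (hb : ∀ t ∈ Set.Ico (0:ℝ) T, HasDerivAt b ((b t)^2 + a t * c t) t)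
    (hc : ∀ t ∈ Set.Ico (0:ℝ) T, HasDerivAt c ((c t)^2 + a t * b t) t)
    (hord : ∀ t ∈ Set.Ico (0:ℝ) T, a t ≤ b t ∧ b t ≤ c t)
    (hS : ∀ t ∈ Set.Ico (0:ℝ) T, 0 < 2 * (a t + b t + c t)) :
    (∀ t ∈ Set.Ico (0:ℝ) T,
      HasDerivAt (fun s => a s / (2 * (a s + b s + c s)))
        (2 / (2 * (a t + b t + c t))^2
          * ((b t)^2 * (c t - a t) + (c t)^2 * (b t - a t))) t ∧
      0 ≤ 2 / (2 * (a t + b t + c t))^2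
          * ((b t)^2 * (c t - a t) + (c t)^2 * (b t - a t))) ∧
    (∀ s ∈ Set.Ico (0:ℝ) T, ∀ t ∈ Set.Ico (0:ℝ) T, s ≤ t →
      a s / (2 * (a s + b s + c s)) ≤ a t / (2 * (a t + b t + c t))) := by
  have key : ∀ t ∈ Set.Ico (0:ℝ) T,
      HasDerivAt (fun s => a s / (2 * (a s + b s + c s)))
        (2 / (2 * (a t + b t + c t))^2
          * ((b t)^2 * (c t - a t) + (c t)^2 * (b t - a t))) t := by
    intro t ht
    have hSne : 2 * (a t + b t + c t) ≠ 0 := ne_of_gt (hS t ht)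
    have hden : HasDerivAt (fun s => 2 * (a s + b s + c s))
        (2 * (((a t)^2 + b t * c t) + ((b t)^2 + a t * c t) + ((c t)^2 + a t * b t))) t :=
      (((ha t ht).add (hb t ht)).add (hc t ht)).const_mul 2
    have : HasDerivAt (fun s => a s / (2 * (a s + b s + c s))) _ t := (ha t ht).fun_div hden hSne
    convert this using 1
    field_simp
    ring
  have hnn : ∀ t ∈ Set.Ico (0:ℝ) T,
      0 ≤ 2 / (2 * (a t + b t + c t))^2
          * ((b t)^2 * (c t - a t) + (c t)^2 * (b t - a t)) := by
    intro t ht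
    have h1 := (hord t ht).1
    have h2 := (hord t ht).2
    have hca : 0 ≤ c t - a t := by linarith
    have hba : 0 ≤ b t - a t := by linarith
    positivity
  refine ⟨fun t ht => ⟨key t ht, hnn t ht⟩, ?_⟩
  intro s hs t ht hst
  have hconv : Convex ℝ (Set.Ico (0:ℝ) T) := convex_Ico 0 T
  have hmono : MonotoneOn (fun s => a s / (2 * (a s + b s + c s))) (Set.Ico (0:ℝ) T) := by
    apply monotoneOn_of_deriv_nonneg hconv
    · intro x hx
      exact (key x hx).continuousAt.continuousWithinAt
    · intro x hx
      have hx' : x ∈ Set.Ico (0:ℝ) T := interior_subset hx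
      exact (key x hx').differentiableAt.differentiableWithinAt
    · intro x hx
      have hx' : x ∈ Set.Ico (0:ℝ) T := interior_subset hx
      rw [(key x hx').deriv]
      exact hnn x hx'
  exact hmono hs ht hst
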